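/- (One-step error, Theorem 4, path-wise form.) Let α ≥ 0, σ > 0, k > 0, T > 0, r > 0, and let t_m ≤ t_{m+1} ≤ t_m + T. Let w be a continuous function on [t_m, t_{m+1}] with w(t_m) = 0 and |w(t)| ≤ r for all t ∈ [t_m, t_{m+1}]. Let Y be a differentiable function on [t_m, t_{m+1}] with Y(t_m) = y_m ≥ σr, Y(t) > (σ/2)r for all t ∈ [t_m, t_{m+1}], and Y′(t) = α/(Y(t) + (σ/2)w(t)) − (k/2)(Y(t) + (σ/2)w(t)). Let y^m(t) = [y_m² e^{−k(t−t_m)} + (2α/k)(1 − e^{−k(t−t_m)})]^{1/2}. Then |(Y(t_{m+1}) + (σ/2)w(t_{m+1})) − (y^m(t_{m+1}) + (σ/2)w(t_{m+1}))| = |Y(t_{m+1}) − y^m(t_{m+1})| ≤ (D₁ + D₂/y_m²)·r·(t_{m+1} − t_m), where D₁ = σk/2 and D₂ = (4ασ/3)·e^{kT/2}. -/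

import Mathlib

set_option maxHeartbeats 1000000


/-- The explicit solution `y^m(t) = [y_m² e^{−k(t−t_m)} + (2α/k)(1 − e^{−k(t−t_m)})]^{1/2}`
of the ODE `dy/dt = α/y − (k/2)y`, `y(t_m) = y_m`. -/
noncomputable def cirY0 (k α tm ym t : ℝ) : ℝ :=
  Real.sqrt (ym ^ 2 * Real.exp (-(k * (t - tm))) +
    2 * α / k * (1 - Real.exp (-(k * (t - tm)))))

lemma le_of_hasDerivWithinAt_nonneg {s t : ℝ} {f f' : ℝ → ℝ} (hst : s ≤ t)
    (hf : ∀ x ∈ Set.Icc s t, HasDerivWithinAt f (f' x) (Set.Icc s t) x)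
    (h0 : ∀ x ∈ Set.Icc s t, 0 ≤ f' x) : f s ≤ f t := by
  have hcont : ContinuousOn f (Set.Icc s t) := fun x hx => (hf x hx).continuousWithinAt
  have hd : ∀ x ∈ interior (Set.Icc s t), HasDerivAt f (f' x) x := by
    intro x hx
    rw [interior_Icc] at hx
    exact (hf x (Set.Ioo_subset_Icc_self hx)).hasDerivAt (Icc_mem_nhds hx.1 hx.2)
  have hmono : MonotoneOn f (Set.Icc s t) := by
    apply monotoneOn_of_deriv_nonneg (convex_Icc s t) hcont
    · intro x hx
      exact (hd x hx).differentiableAt.differentiableWithinAt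
    · intro x hx
      rw [(hd x hx).deriv]
      exact h0 x (interior_subset hx)
  exact hmono (Set.left_mem_Icc.2 hst) (Set.right_mem_Icc.2 hst) hst

lemma exp_aux {z : ℝ} (h0 : 0 ≤ z) (h1 : z ≤ 1/2) :
    Real.exp z - Real.exp (-z) ≤ 8/3 * z := by
  have hp : (3:ℝ)/4 ≤ 1 - z/2 := by linarith
  have h6 : (0:ℝ) < (1 - z/2)^2 := by nlinarith
  have h2 : (1 - z/2) ^ 2 ≤ Real.exp (-z) := by
    have hh := Real.add_one_le_exp (-(z/2))
    have h2a : (1 - z/2)^2 ≤ (Real.exp (-(z/2)))^2 := by nlinarith [Real.exp_pos (-(z/2))]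
    have h2b : (Real.exp (-(z/2)))^2 = Real.exp (-z) := by
      rw [pow_two, ← Real.exp_add]; ring_nf
    linarith
  have hmul : Real.exp z * Real.exp (-z) = 1 := by rw [← Real.exp_add]; simp
  have h3 : Real.exp z * (1 - z/2)^2 ≤ 1 := by
    nlinarith [mul_nonneg (sub_nonneg.2 h2) (Real.exp_pos z).le]
  have h3' : Real.exp z ≤ 1/(1-z/2)^2 := by
    rw [le_div_iff₀ h6]; linarith
  have h4 : 1 - z ≤ Real.exp (-z) := by linarith [Real.add_one_le_exp (-z)]
  have h5 : (1:ℝ) ≤ (8/3*z + 1 - z) * (1 - z/2)^2 := by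
    nlinarith [mul_nonneg (mul_nonneg h0 (by linarith : (0:ℝ) ≤ 1 - 2*z)) (by linarith : (0:ℝ) ≤ 8 - z),
      mul_nonneg h0 (mul_nonneg h0 h0)]
  have h7 : 1/(1-z/2)^2 ≤ 8/3*z + 1 - z := by
    rw [div_le_iff₀ h6]; linarith
  linarith

lemma expneg_bounds : (0.3678:ℝ) < Real.exp (-1) ∧ Real.exp (-1) < (0.36788:ℝ) := by
  have hE : Real.exp (-1) * Real.exp 1 = 1 := by rw [← Real.exp_add]; simp
  have h1 := Real.exp_one_lt_d9
  have h2 := Real.exp_one_gt_d9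
  have h3 := Real.exp_pos (-1)
  constructor
  · nlinarith
  · nlinarith

lemma cubic_aux {q : ℝ} (hql : (0.6:ℝ) ≤ q) (h78 : q ≤ 7/8) :
    (0:ℝ) ≤ 8*q^3 - 5.10364*q^2 - 3.89122*q + 2.5746 := by
  nlinarith [mul_nonneg (sq_nonneg (q - 0.668)) (by linarith : (0:ℝ) ≤ q + 0.698)]

lemma claimC {b c q : ℝ} (hb : 0 ≤ b) (hcl : Real.exp (-1) ≤ c^2) (hc1 : c ≤ 1) (hc0 : 0 < c)
    (hq : q^2 = c^2 + b*(1-c^2)) (hcq : c ≤ q) :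
    b ≤ q*(q-1/2)*(1 + 8*b/(3*c)) := by
  obtain ⟨hE1, hE2⟩ := expneg_bounds
  have hc12 : 1/2 < c := by nlinarith
  have hq12 : 1/2 < q := lt_of_lt_of_le hc12 hcq
  have hq0 : 0 < q := by linarith
  have key : b * (1 - 8/3*(q - 1/2)) ≤ q*(q-1/2) := by
    rcases le_or_gt (7/8 : ℝ) q with h78 | h78
    · have hn : 1 - 8/3*(q-1/2) ≤ 0 := by linarith
      have : b * (1 - 8/3*(q-1/2)) ≤ 0 := mul_nonpos_of_nonneg_of_nonpos hb hn
      nlinarith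
    · have hcc : c < 7/8 := lt_of_le_of_lt hcq h78
      have hc2lt : c^2 < 1 := by nlinarith
      have hb1 : b ≤ 1 := by nlinarith
      have hbb : b * (1 - Real.exp (-1)) ≤ q^2 - Real.exp (-1) := by
        nlinarith [mul_nonneg (sub_nonneg.2 hcl) (sub_nonneg.2 hb1)]
      have hql : (0.6:ℝ) ≤ q := by nlinarith
      have hcoef : (0:ℝ) < 1 - 8/3*(q-1/2) := by linarith
      have hA := cubic_aux hql h78.le
      have hcubic : (q^2 - Real.exp (-1))*(1 - 8/3*(q-1/2)) ≤ (1-Real.exp (-1))*(q*(q-1/2)) := by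
        nlinarith [mul_nonneg (by linarith : (0:ℝ) ≤ 0.36788 - Real.exp (-1)) (sq_nonneg q),
          mul_nonneg (by linarith : (0:ℝ) ≤ 0.36788 - Real.exp (-1)) (by linarith : (0:ℝ) ≤ q)]
      have hchain := mul_le_mul_of_nonneg_right hbb hcoef.le
      nlinarith [hchain, hcubic]
  have hqc1 : 1 ≤ q / c := (one_le_div hc0).2 hcq
  have step2 : 8*b/3*(q-1/2) ≤ q*(q-1/2)*(8*b/(3*c)) := by
    have hrw : q*(q-1/2)*(8*b/(3*c)) = (q/c) * ((q-1/2)*(8*b/3)) := by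
      field_simp
    rw [hrw]
    nlinarith [mul_nonneg (sub_nonneg.2 hq12.le) hb,
      mul_nonneg (mul_nonneg (sub_nonneg.2 hq12.le) hb) (sub_nonneg.2 hqc1)]
  nlinarith [key, step2]

lemma claimC2 {α k ym c yv s : ℝ} (hα : 0 ≤ α) (hk : 0 < k) (hym : 0 < ym)
    (hcl : Real.exp (-1) ≤ c^2) (hc1 : c ≤ 1) (hc0 : 0 < c)
    (hyv : yv^2 = ym^2*c^2 + 2*α/k*(1-c^2)) (hcy : ym*c ≤ yv)
    (hs : s ≤ ym/2) (hs0 : 0 ≤ s) (hsy : s < yv) :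
    α / ((yv - s)*yv) ≤ k/2 + 8*α/(3*c*ym^2) := by
  have hyv0 : 0 < yv := lt_of_lt_of_le (mul_pos hym hc0) hcy
  have hq2 : (yv/ym)^2 = c^2 + (2*α/(k*ym^2))*(1-c^2) := by
    rw [div_pow, hyv]
    field_simp
  have hcq : c ≤ yv/ym := by
    rw [le_div_iff₀ hym]
    linarith
  have hb0 : 0 ≤ 2*α/(k*ym^2) := by positivity
  have hclaim := claimC hb0 hcl hc1 hc0 hq2 hcq
  obtain ⟨hE1, _⟩ := expneg_bounds
  have hc12 : 1/2 < c := by nlinarith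
  have hq12 : ym/2 < yv := by nlinarith
  have hident : (yv/ym)*((yv/ym) - 1/2)*(1 + 8*(2*α/(k*ym^2))/(3*c))
      = (yv*(yv-ym/2)) * (k/2 + 8*α/(3*c*ym^2)) * (2/(k*ym^2)) := by
    field_simp
  have h3 : α ≤ (yv*(yv-ym/2)) * (k/2 + 8*α/(3*c*ym^2)) := by
    have hpos : (0:ℝ) < k*ym^2/2 := by positivity
    calc α = (2*α/(k*ym^2)) * (k*ym^2/2) := by field_simp
      _ ≤ ((yv*(yv-ym/2)) * (k/2 + 8*α/(3*c*ym^2)) * (2/(k*ym^2))) * (k*ym^2/2) := by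
          apply mul_le_mul_of_nonneg_right _ hpos.le
          rw [← hident]; exact hclaim
      _ = (yv*(yv-ym/2)) * (k/2 + 8*α/(3*c*ym^2)) := by field_simp
  have hM0 : (0:ℝ) ≤ k/2 + 8*α/(3*c*ym^2) := by positivity
  have h1' : yv*(yv-ym/2) ≤ (yv-s)*yv := by nlinarith
  have h4 : α ≤ ((yv-s)*yv) * (k/2 + 8*α/(3*c*ym^2)) :=
    le_trans h3 (mul_le_mul_of_nonneg_right h1' hM0)
  have hD : (0:ℝ) < (yv - s)*yv := mul_pos (by linarith) hyv0
  rw [div_le_iff₀ hD]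
  nlinarith [h4]

theorem stmt_12 (α σ k T r tm tm1 ym : ℝ) (hα : 0 ≤ α) (hσ : 0 < σ) (hk : 0 < k)
    (hT : 0 < T) (hr : 0 < r) (htm : tm ≤ tm1) (htm1 : tm1 ≤ tm + T)
    (w : ℝ → ℝ) (hw : ContinuousOn w (Set.Icc tm tm1)) (hw0 : w tm = 0)
    (hwr : ∀ t ∈ Set.Icc tm tm1, |w t| ≤ r)
    (Y : ℝ → ℝ) (hinit : Y tm = ym) (hym : σ * r ≤ ym)
    (hpos : ∀ t ∈ Set.Icc tm tm1, σ / 2 * r < Y t)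
    (hder : ∀ t ∈ Set.Icc tm tm1, HasDerivWithinAt Y
      (α / (Y t + σ / 2 * w t) - k / 2 * (Y t + σ / 2 * w t)) (Set.Icc tm tm1) t) :
    let D₁ : ℝ := σ * k / 2
    let D₂ : ℝ := 4 * α * σ / 3 * Real.exp (k * T / 2)
    |(Y tm1 + σ / 2 * w tm1) - (cirY0 k α tm ym tm1 + σ / 2 * w tm1)| =
      |Y tm1 - cirY0 k α tm ym tm1| ∧
    |Y tm1 - cirY0 k α tm ym tm1| ≤ (D₁ + D₂ / ym ^ 2) * r * (tm1 - tm) := by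
  intro D₁ D₂
  refine ⟨by congr 1; ring, ?_⟩
  show |Y tm1 - cirY0 k α tm ym tm1| ≤
    (σ * k / 2 + 4 * α * σ / 3 * Real.exp (k * T / 2) / ym ^ 2) * r * (tm1 - tm)
  set a : ℝ := σ * r with ha_def
  have ha0 : 0 < a := mul_pos hσ hr
  have hym0 : 0 < ym := lt_of_lt_of_le ha0 hym
  have hΔ0 : 0 ≤ tm1 - tm := by linarith
  have hΔT : tm1 - tm ≤ T := by linarith
  set u : ℝ → ℝ := fun t => σ / 2 * w t with hu_def
  set yy : ℝ → ℝ := fun t => cirY0 k α tm ym t with hyy_def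
  set e : ℝ → ℝ := fun t => Y t - yy t with he_def
  set g : ℝ → ℝ := fun t => ym ^ 2 * Real.exp (-(k * (t - tm))) +
    2 * α / k * (1 - Real.exp (-(k * (t - tm)))) with hg_def
  clear_value a u yy e g
  have hyy_g : ∀ t, yy t = Real.sqrt (g t) := fun t => by
    simp only [hyy_def, hg_def, cirY0]
  -- basic bounds on u and Y
  have hu_abs : ∀ t ∈ Set.Icc tm tm1, |u t| ≤ a / 2 := by
    intro t ht
    have h1 := hwr t ht
    have h2 : |u t| = σ/2 * |w t| := by
      rw [hu_def]; simp only
      rw [abs_mul, abs_of_nonneg (by positivity : (0:ℝ) ≤ σ/2)]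
    rw [h2, ha_def]
    calc σ/2 * |w t| ≤ σ/2 * r := by gcongr
      _ = σ * r / 2 := by ring
  have hu_lb : ∀ t ∈ Set.Icc tm tm1, -(a/2) ≤ u t := fun t ht => neg_le_of_abs_le (hu_abs t ht)
  have hu_ub : ∀ t ∈ Set.Icc tm tm1, u t ≤ a/2 := fun t ht => le_of_abs_le (hu_abs t ht)
  have hY_lb : ∀ t ∈ Set.Icc tm tm1, a/2 < Y t := by
    intro t ht
    have := hpos t ht
    rw [ha_def]; linarith
  have hYu_pos : ∀ t ∈ Set.Icc tm tm1, 0 < Y t + u t := by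
    intro t ht
    have h1 := hY_lb t ht
    have h2 := hu_lb t ht
    linarith
  -- facts about g and yy
  have hexp_sq : ∀ x : ℝ, Real.exp x ^ 2 = Real.exp (2*x) := fun x => by
    rw [pow_two, ← Real.exp_add]; ring_nf
  have hg_pos : ∀ t ∈ Set.Icc tm tm1, 0 < g t := by
    intro t ht
    have h1 : 0 < ym^2 * Real.exp (-(k*(t-tm))) := by positivity
    have h2 : Real.exp (-(k*(t-tm))) ≤ 1 := by
      rw [Real.exp_le_one_iff]
      have : 0 ≤ t - tm := by linarith [ht.1]
      nlinarith
    have h3 : 0 ≤ 2*α/k * (1 - Real.exp (-(k*(t-tm)))) := by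
      apply mul_nonneg (by positivity)
      linarith
    rw [hg_def]
    simp only
    linarith
  have hyy_pos : ∀ t ∈ Set.Icc tm tm1, 0 < yy t := by
    intro t ht
    rw [hyy_g t]
    exact Real.sqrt_pos.2 (hg_pos t ht)
  have hyy_sq : ∀ t ∈ Set.Icc tm tm1, yy t ^ 2 = g t := by
    intro t ht
    rw [hyy_g t]
    exact Real.sq_sqrt (hg_pos t ht).le
  have hyy_lb : ∀ t ∈ Set.Icc tm tm1, ym * Real.exp (-(k*(t-tm))/2) ≤ yy t := by
    intro t ht
    rw [hyy_g t]
    rw [Real.le_sqrt (by positivity) (hg_pos t ht).le]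
    have h1 : (ym * Real.exp (-(k*(t-tm))/2))^2 = ym^2 * Real.exp (-(k*(t-tm))) := by
      rw [mul_pow, hexp_sq, show 2*(-(k*(t-tm))/2) = -(k*(t-tm)) by ring]
    rw [h1, hg_def]
    simp only
    have h2 : Real.exp (-(k*(t-tm))) ≤ 1 := by
      rw [Real.exp_le_one_iff]
      have : 0 ≤ t - tm := by linarith [ht.1]
      nlinarith
    have h3 : 0 ≤ 2*α/k * (1 - Real.exp (-(k*(t-tm)))) := by
      apply mul_nonneg (by positivity)
      linarith
    linarith
  have hyy_tm : yy tm = ym := by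
    rw [hyy_g tm]
    rw [hg_def]
    simp only [sub_self, mul_zero, neg_zero, Real.exp_zero, mul_one, sub_self, mul_zero, add_zero]
    exact Real.sqrt_sq hym0.le
  have he_tm : e tm = 0 := by
    simp only [he_def, hinit, hyy_tm, sub_self]
  -- derivative of yy
  have hk0 : k ≠ 0 := ne_of_gt hk
  have hg_deriv : ∀ x : ℝ, HasDerivAt g ((2*α - k*ym^2) * Real.exp (-(k*(x-tm)))) x := by
    intro x
    have h1 : HasDerivAt (fun t : ℝ => -(k*(t-tm))) (-k) x := by
      have h := (((hasDerivAt_id x).sub_const tm).const_mul k).neg; rw [mul_one] at h; exact h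
    have h2 : HasDerivAt (fun t : ℝ => Real.exp (-(k*(t-tm)))) (Real.exp (-(k*(x-tm))) * (-k)) x := h1.exp
    have h3 : HasDerivAt (fun t : ℝ => ym^2 * Real.exp (-(k*(t-tm))))
        (ym^2 * (Real.exp (-(k*(x-tm))) * (-k))) x := h2.const_mul (ym^2)
    have h4 : HasDerivAt (fun t : ℝ => 2*α/k * (1 - Real.exp (-(k*(t-tm)))))
        (2*α/k * -(Real.exp (-(k*(x-tm))) * (-k))) x := (h2.const_sub 1).const_mul (2*α/k)
    have h5 := h3.add h4
    rw [hg_def]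
    refine h5.congr_deriv ?_
    linear_combination (Real.exp (-(k*(x-tm)))) * (div_mul_cancel₀ (2*α) hk0)
  have hyy_deriv : ∀ x ∈ Set.Icc tm tm1,
      HasDerivWithinAt yy (α / yy x - k/2 * yy x) (Set.Icc tm tm1) x := by
    intro x hx
    have hgx := hg_pos x hx
    have hyx := hyy_pos x hx
    have hsq := hyy_sq x hx
    have hyyfun : yy = fun t => Real.sqrt (g t) := funext hyy_g
    have h1 : HasDerivAt (fun t => Real.sqrt (g t))
        (1 / (2 * Real.sqrt (g x)) * ((2*α - k*ym^2) * Real.exp (-(k*(x-tm))))) x :=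
      (Real.hasDerivAt_sqrt (ne_of_gt hgx)).comp x (hg_deriv x)
    have h2 : HasDerivAt yy
        (1 / (2 * Real.sqrt (g x)) * ((2*α - k*ym^2) * Real.exp (-(k*(x-tm))))) x := by
      rw [hyyfun]; exact h1
    have hgid : (2*α - k*ym^2) * Real.exp (-(k*(x-tm))) = 2*α - k * g x := by
      rw [hg_def]; simp only; field_simp; ring
    have hval : 1 / (2 * Real.sqrt (g x)) * ((2*α - k*ym^2) * Real.exp (-(k*(x-tm))))
        = α / yy x - k/2 * yy x := by
      rw [hgid, show Real.sqrt (g x) = yy x from (hyy_g x).symm, ← hsq]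
      have hyne : yy x ≠ 0 := ne_of_gt hyx
      field_simp
    rw [hval] at h2
    exact h2.hasDerivWithinAt
  -- phi and derivative of e
  set phi : ℝ → ℝ := fun t => α / ((Y t + u t) * yy t) + k/2 with hphi_def
  clear_value phi
  have hphi_pos : ∀ t ∈ Set.Icc tm tm1, 0 < phi t := by
    intro t ht
    have h1 : 0 ≤ α / ((Y t + u t) * yy t) :=
      div_nonneg hα (mul_nonneg (hYu_pos t ht).le (hyy_pos t ht).le)
    rw [hphi_def]
    simp only
    linarith
  have he_deriv : ∀ x ∈ Set.Icc tm tm1,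
      HasDerivWithinAt e (-(phi x * (e x + u x))) (Set.Icc tm tm1) x := by
    intro x hx
    have h1 := (hder x hx).sub (hyy_deriv x hx)
    have hA := hYu_pos x hx
    have hB := hyy_pos x hx
    have h2 : α / (Y x + σ / 2 * w x) - k / 2 * (Y x + σ / 2 * w x) - (α / yy x - k/2 * yy x)
        = -(phi x * (e x + u x)) := by
      have heu : e x + u x = (Y x + u x) - yy x := by simp only [he_def]; ring
      have h3 : Y x + σ/2 * w x = Y x + u x := by simp only [hu_def]
      rw [hphi_def]
      simp only
      rw [heu, h3]
      have hAne : Y x + u x ≠ 0 := ne_of_gt hA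
      have hBne : yy x ≠ 0 := ne_of_gt hB
      field_simp
      ring
    rw [← h2]
    show HasDerivWithinAt e _ _ _
    rw [he_def]
    exact h1
  have hconte : ContinuousOn e (Set.Icc tm tm1) :=
    fun x hx => (he_deriv x hx).continuousWithinAt
  -- Lemma A : a priori bound |e| <= a/2
  have lemA_up : ∀ t₀ ∈ Set.Icc tm tm1, e t₀ ≤ a / 2 := by
    intro t₀ ht₀
    by_contra hcon
    push_neg at hcon
    have hsub0 : Set.Icc tm t₀ ⊆ Set.Icc tm tm1 := Set.Icc_subset_Icc le_rfl ht₀.2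
    set S : Set ℝ := Set.Icc tm t₀ ∩ {s | e s ≤ a/2} with hS_def
    have htmS : tm ∈ S := ⟨Set.left_mem_Icc.2 ht₀.1, by simp only [Set.mem_setOf_eq, he_tm]; linarith⟩
    have hSne : S.Nonempty := ⟨tm, htmS⟩
    have hSbdd : BddAbove S := BddAbove.mono Set.inter_subset_left bddAbove_Icc
    have hSclosed : IsClosed S :=
      (hconte.mono hsub0).preimage_isClosed_of_isClosed isClosed_Icc isClosed_Iic
    have htsS : sSup S ∈ S := hSclosed.csSup_mem hSne hSbdd
    set ts := sSup S with hts_def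
    have hts_mem : ts ∈ Set.Icc tm t₀ := htsS.1
    have hts_I : ts ∈ Set.Icc tm tm1 := hsub0 hts_mem
    have hts_lt : ts < t₀ := by
      rcases lt_or_eq_of_le hts_mem.2 with h | h
      · exact h
      · exfalso
        have := htsS.2
        rw [h] at this
        simp only [Set.mem_setOf_eq] at this
        linarith
    have hnotS : ∀ x, ts < x → x ≤ t₀ → a/2 < e x := by
      intro x h1 h2
      by_contra h3
      push_neg at h3
      have hxS : x ∈ S := ⟨⟨le_trans hts_mem.1 h1.le, h2⟩, h3⟩
      exact absurd (le_csSup hSbdd hxS) (not_le.2 h1)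
    clear_value ts
    have hsub1 : Set.Icc ts t₀ ⊆ Set.Icc tm tm1 := Set.Icc_subset_Icc hts_mem.1 ht₀.2
    have hets : e ts = a/2 := by
      refine le_antisymm htsS.2 ?_
      have hne : (nhdsWithin ts (Set.Ioc ts t₀)).NeBot := left_nhdsWithin_Ioc_neBot hts_lt
      have hcw : ContinuousWithinAt e (Set.Ioc ts t₀) ts :=
        (hconte ts hts_I).mono (subset_trans Set.Ioc_subset_Icc_self hsub1)
      exact ge_of_tendsto hcw (by
        filter_upwards [self_mem_nhdsWithin] with x hx
        exact (hnotS x hx.1 hx.2).le)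
    have hmono := le_of_hasDerivWithinAt_nonneg (s := ts) (t := t₀)
      (f := fun x => -(e x)) (f' := fun x => phi x * (e x + u x)) hts_lt.le
      (fun x hx => by have h := ((he_deriv x (hsub1 hx)).mono hsub1).neg; rw [neg_neg] at h; exact h)
      (fun x hx => by
        have hx1 : x ∈ Set.Icc tm tm1 := hsub1 hx
        show (0:ℝ) ≤ phi x * (e x + u x)
        have heu : 0 ≤ e x + u x := by
          rcases eq_or_lt_of_le hx.1 with h | h
          · rw [← h, hets]
            linarith [hu_lb ts hts_I]
          · have h5 := hnotS x h hx.2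
            have h6 := hu_lb x hx1
            linarith
        exact mul_nonneg (hphi_pos x hx1).le heu)
    have hmono' : -(e ts) ≤ -(e t₀) := hmono
    linarith
  have lemA_dn : ∀ t₀ ∈ Set.Icc tm tm1, -(a / 2) ≤ e t₀ := by
    intro t₀ ht₀
    by_contra hcon
    push_neg at hcon
    have hsub0 : Set.Icc tm t₀ ⊆ Set.Icc tm tm1 := Set.Icc_subset_Icc le_rfl ht₀.2
    set S : Set ℝ := Set.Icc tm t₀ ∩ {s | -(a/2) ≤ e s} with hS_def
    have htmS : tm ∈ S := ⟨Set.left_mem_Icc.2 ht₀.1, by simp only [Set.mem_setOf_eq, he_tm]; linarith⟩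
    have hSne : S.Nonempty := ⟨tm, htmS⟩
    have hSbdd : BddAbove S := BddAbove.mono Set.inter_subset_left bddAbove_Icc
    have hSclosed : IsClosed S :=
      (hconte.mono hsub0).preimage_isClosed_of_isClosed isClosed_Icc isClosed_Ici
    have htsS : sSup S ∈ S := hSclosed.csSup_mem hSne hSbdd
    set ts := sSup S with hts_def
    have hts_mem : ts ∈ Set.Icc tm t₀ := htsS.1
    have hts_I : ts ∈ Set.Icc tm tm1 := hsub0 hts_mem
    have hts_lt : ts < t₀ := by
      rcases lt_or_eq_of_le hts_mem.2 with h | h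
      · exact h
      · exfalso
        have := htsS.2
        rw [h] at this
        simp only [Set.mem_setOf_eq] at this
        linarith
    have hnotS : ∀ x, ts < x → x ≤ t₀ → e x < -(a/2) := by
      intro x h1 h2
      by_contra h3
      push_neg at h3
      have hxS : x ∈ S := ⟨⟨le_trans hts_mem.1 h1.le, h2⟩, h3⟩
      exact absurd (le_csSup hSbdd hxS) (not_le.2 h1)
    clear_value ts
    have hsub1 : Set.Icc ts t₀ ⊆ Set.Icc tm tm1 := Set.Icc_subset_Icc hts_mem.1 ht₀.2
    have hets : e ts = -(a/2) := by
      refine le_antisymm ?_ htsS.2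
      have hne : (nhdsWithin ts (Set.Ioc ts t₀)).NeBot := left_nhdsWithin_Ioc_neBot hts_lt
      have hcw : ContinuousWithinAt e (Set.Ioc ts t₀) ts :=
        (hconte ts hts_I).mono (subset_trans Set.Ioc_subset_Icc_self hsub1)
      exact le_of_tendsto hcw (by
        filter_upwards [self_mem_nhdsWithin] with x hx
        exact (hnotS x hx.1 hx.2).le)
    have hmono := le_of_hasDerivWithinAt_nonneg (s := ts) (t := t₀)
      (f := e) (f' := fun x => -(phi x * (e x + u x))) hts_lt.le
      (fun x hx => (he_deriv x (hsub1 hx)).mono hsub1)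
      (fun x hx => by
        have hx1 : x ∈ Set.Icc tm tm1 := hsub1 hx
        show (0:ℝ) ≤ -(phi x * (e x + u x))
        have heu : e x + u x ≤ 0 := by
          rcases eq_or_lt_of_le hx.1 with h | h
          · rw [← h, hets]
            linarith [hu_ub ts hts_I]
          · have h5 := hnotS x h hx.2
            have h6 := hu_ub x hx1
            linarith
        have := mul_nonpos_of_nonneg_of_nonpos (hphi_pos x hx1).le heu
        linarith)
    have hmono' : e ts ≤ e t₀ := hmono
    linarith
  have he_abs : ∀ t ∈ Set.Icc tm tm1, |e t| ≤ a/2 :=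
    fun t ht => abs_le.2 ⟨lemA_dn t ht, lemA_up t ht⟩
  -- final reductions
  set C2 : ℝ := k*a/2 + 4*α*a/3*Real.exp (k*T/2)/ym^2 with hC2_def
  clear_value C2
  have hC2_0 : 0 ≤ C2 := by
    rw [hC2_def]
    have := Real.exp_pos (k*T/2)
    positivity
  have hC2_lb : k*a/2 ≤ C2 := by
    rw [hC2_def]
    have h1 : 0 ≤ 4*α*a/3*Real.exp (k*T/2)/ym^2 := by positivity
    linarith
  have hgoal_eq : (σ * k / 2 + 4 * α * σ / 3 * Real.exp (k * T / 2) / ym ^ 2) * r * (tm1 - tm)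
      = C2 * (tm1-tm) := by
    rw [hC2_def, ha_def]; ring
  have hconv : Y tm1 - cirY0 k α tm ym tm1 = e tm1 := by simp only [he_def, hyy_def]
  rw [hgoal_eq, hconv]
  rcases le_or_gt 1 (k * (tm1 - tm)) with hbig | hsmall
  · have h1 := he_abs tm1 (Set.right_mem_Icc.2 htm)
    have h2 : a/2 ≤ k*a/2 * (tm1-tm) := by nlinarith
    have h3 : k*a/2*(tm1-tm) ≤ C2*(tm1-tm) := mul_le_mul_of_nonneg_right hC2_lb hΔ0
    linarith
  · rw [abs_le]
    constructor
    · -- lower bound via comparison with explicit function M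
      set M : ℝ → ℝ := fun t => -(a*(k*(t - tm)/2 + α/ym^2 * (Real.exp (k*(t-tm)) - 1)/k)) with hM_def
      clear_value M
      have hM_deriv : ∀ x : ℝ, HasDerivAt M (-(a*(k/2 + α/ym^2 * Real.exp (k*(x-tm))))) x := by
        intro x
        rw [hM_def]
        have h1 : HasDerivAt (fun t : ℝ => k*(t-tm)) k x := by
          simpa using ((hasDerivAt_id x).sub_const tm).const_mul k
        have h2 : HasDerivAt (fun t : ℝ => Real.exp (k*(t-tm))) (Real.exp (k*(x-tm)) * k) x := h1.exp
        have h3 : HasDerivAt (fun t : ℝ => k*(t-tm)/2) (k/2) x := h1.div_const 2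
        have h4 : HasDerivAt (fun t : ℝ => α/ym^2 * (Real.exp (k*(t-tm)) - 1)/k)
            (α/ym^2 * (Real.exp (k*(x-tm)) * k)/k) x :=
          ((h2.sub_const 1).const_mul (α/ym^2)).div_const k
        have h5 := ((h3.add h4).const_mul a).neg
        refine h5.congr_deriv ?_
        linear_combination (-(a*(α/ym^2)*Real.exp (k*(x-tm)))) * (div_self hk0)
      have hF := le_of_hasDerivWithinAt_nonneg (s := tm) (t := tm1)
        (f := fun t => e t - M t)
        (f' := fun x => -(phi x * (e x + u x)) - -(a*(k/2 + α/ym^2 * Real.exp (k*(x-tm))))) htm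
        (fun x hx => (he_deriv x hx).sub ((hM_deriv x).hasDerivWithinAt))
        (fun x hx => by
          show (0:ℝ) ≤ -(phi x * (e x + u x)) - -(a*(k/2 + α/ym^2 * Real.exp (k*(x-tm))))
          have hMneg : (0:ℝ) ≤ a*(k/2 + α/ym^2 * Real.exp (k*(x-tm))) := by
            have := (Real.exp_pos (k*(x-tm))).le
            positivity
          rcases le_or_gt (e x + u x) 0 with h | h
          · have h1 := mul_nonpos_of_nonneg_of_nonpos (hphi_pos x hx).le h
            linarith
          · have hphi_ub : phi x ≤ k/2 + α/ym^2 * Real.exp (k*(x-tm)) := by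
              have heq : e x = Y x - yy x := by rw [he_def]
              have hYuy : yy x ≤ Y x + u x := by linarith
              have hyyx := hyy_pos x hx
              have h6 : yy x ^ 2 ≤ (Y x + u x) * yy x := by nlinarith
              have hexp1 : Real.exp (-(k*(x-tm))) ≤ 1 := by
                rw [Real.exp_le_one_iff]
                nlinarith [hx.1]
              have h7 : ym^2 * Real.exp (-(k*(x-tm))) ≤ g x := by
                rw [hg_def]
                simp only
                have h8 : 0 ≤ 2*α/k * (1 - Real.exp (-(k*(x-tm)))) := by
                  apply mul_nonneg (by positivity)
                  linarith
                linarith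
              have hg_lb : ym^2 * Real.exp (-(k*(x-tm))) ≤ (Y x + u x) * yy x := by
                linarith [hyy_sq x hx]
              have h8 : α / ((Y x + u x) * yy x) ≤ α / (ym^2 * Real.exp (-(k*(x-tm)))) :=
                div_le_div_of_nonneg_left hα (by positivity) hg_lb
              have h9 : α / (ym^2 * Real.exp (-(k*(x-tm)))) = α/ym^2 * Real.exp (k*(x-tm)) := by
                rw [Real.exp_neg]
                have := (Real.exp_pos (k*(x-tm))).ne'
                field_simp
              rw [hphi_def]
              simp only
              linarith [h8, h9.le, h9.ge]
            have heua : e x + u x ≤ a := by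
              linarith [lemA_up x hx, hu_ub x hx]
            have hmul : phi x * (e x + u x) ≤ (k/2 + α/ym^2 * Real.exp (k*(x-tm))) * a := by
              apply mul_le_mul hphi_ub heua h.le
              have := (Real.exp_pos (k*(x-tm))).le
              positivity
            nlinarith [hmul])
      have hF' : e tm - M tm ≤ e tm1 - M tm1 := hF
      have hFtm : M tm = 0 := by
        rw [hM_def]
        simp
      have hz0 : (0:ℝ) ≤ k*(tm1-tm)/2 := by
        have := mul_nonneg hk.le hΔ0
        linarith
      have hz := exp_aux (z := k*(tm1-tm)/2) hz0 (by linarith)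
      have h1 : Real.exp (k*(tm1-tm)/2) ≤ Real.exp (k*T/2) := by
        apply Real.exp_le_exp.2
        have := mul_le_mul_of_nonneg_left hΔT hk.le
        linarith
      have h2 : Real.exp (k*(tm1-tm)/2) * Real.exp (k*(tm1-tm)/2) = Real.exp (k*(tm1-tm)) := by
        rw [← Real.exp_add]
        ring_nf
      have h3 : Real.exp (k*(tm1-tm)/2) * Real.exp (-(k*(tm1-tm)/2)) = 1 := by
        rw [← Real.exp_add]
        ring_nf
        exact Real.exp_zero
      have h4 : Real.exp (k*(tm1-tm)) - 1 ≤ 4/3*(k*(tm1-tm))*Real.exp (k*T/2) := by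
        nlinarith [mul_le_mul_of_nonneg_left hz (Real.exp_pos (k*(tm1-tm)/2)).le,
          mul_le_mul_of_nonneg_left h1 (by linarith : (0:ℝ) ≤ 8/3*(k*(tm1-tm)/2))]
      have h4' : (Real.exp (k*(tm1-tm)) - 1)/k ≤ 4/3*(tm1-tm)*Real.exp (k*T/2) := by
        rw [div_le_iff₀ hk]
        nlinarith [h4]
      have hMfinal : -(C2*(tm1-tm)) ≤ M tm1 := by
        rw [hM_def, hC2_def]
        simp only
        have h5 : (0:ℝ) ≤ a*(α/ym^2) := by positivity
        have hq := mul_le_mul_of_nonneg_left h4' h5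
        ring_nf at hq ⊢
        linarith
      linarith [hF', hFtm, hMfinal, he_tm]
    · -- upper bound
      have hspeed : ∀ x ∈ Set.Icc tm tm1, 0 ≤ e x → -(phi x * (e x + u x)) ≤ C2 := by
        intro x hx hex
        rcases le_or_gt 0 (e x + u x) with h | h
        · have h1 := mul_nonneg (hphi_pos x hx).le h
          linarith
        · have hτ1 : k*(x - tm) ≤ 1 := by
            have := mul_le_mul_of_nonneg_left (sub_le_sub_right hx.2 tm) hk.le
            linarith
          set c : ℝ := Real.exp (-(k*(x-tm))/2) with hc_def
          clear_value c
          have hc0 : 0 < c := by rw [hc_def]; exact Real.exp_pos _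
          have hc1 : c ≤ 1 := by
            rw [hc_def, Real.exp_le_one_iff]
            have h0 : 0 ≤ k*(x-tm) := mul_nonneg hk.le (by linarith [hx.1])
            linarith
          have hcsq : c^2 = Real.exp (-(k*(x-tm))) := by
            rw [hc_def, hexp_sq, show 2*(-(k*(x-tm))/2) = -(k*(x-tm)) by ring]
          have hcl : Real.exp (-1) ≤ c^2 := by
            rw [hcsq]
            apply Real.exp_le_exp.2
            linarith
          have hyv : (yy x)^2 = ym^2*c^2 + 2*α/k*(1-c^2) := by
            rw [hyy_sq x hx, hg_def, hcsq]
          have hcy : ym*c ≤ yy x := by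
            rw [hc_def]
            exact hyy_lb x hx
          obtain ⟨hE1, _⟩ := expneg_bounds
          have hc12 : 1/2 < c := by nlinarith
          have hyyx := hyy_pos x hx
          have hyam : a/2 < yy x := by nlinarith
          have hlem := claimC2 (s := a/2) hα hk hym0 hcl hc1 hc0 hyv hcy
            (by linarith) (by linarith) (by linarith)
          have hcinv : c⁻¹ = Real.exp (k*(x-tm)/2) := by
            rw [hc_def, ← Real.exp_neg]
            congr 1
            ring
          have hTexp : Real.exp (k*(x-tm)/2) ≤ Real.exp (k*T/2) := by
            apply Real.exp_le_exp.2
            have hxT : x - tm ≤ T := by linarith [hx.2]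
            have := mul_le_mul_of_nonneg_left hxT hk.le
            linarith
          have hcT : c⁻¹ ≤ Real.exp (k*T/2) := by rw [hcinv]; exact hTexp
          have h3 : 8*α/(3*c*ym^2) = 8*α/(3*ym^2) * c⁻¹ := by
            rw [show 3*c*ym^2 = 3*ym^2*c by ring, ← div_div, div_eq_mul_inv]
          have h3' : 8*α/(3*c*ym^2) ≤ 8*α*Real.exp (k*T/2)/(3*ym^2) := by
            rw [h3]
            calc 8*α/(3*ym^2) * c⁻¹ ≤ 8*α/(3*ym^2) * Real.exp (k*T/2) := by
                  apply mul_le_mul_of_nonneg_left hcT (by positivity)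
              _ = 8*α*Real.exp (k*T/2)/(3*ym^2) := by ring
          have heq : e x = Y x - yy x := by rw [he_def]
          have hYu_lb : yy x - a/2 ≤ Y x + u x := by
            linarith [hu_lb x hx]
          have hprod_pos : 0 < (yy x - a/2) * yy x := mul_pos (by linarith) hyyx
          have hmono2 : α/((Y x + u x)*yy x) ≤ α/((yy x - a/2)*yy x) := by
            exact div_le_div_of_nonneg_left hα hprod_pos
              (mul_le_mul_of_nonneg_right hYu_lb hyyx.le)
          have hphi_ub : phi x ≤ k + 8*α*Real.exp (k*T/2)/(3*ym^2) := by
            rw [hphi_def]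
            simp only
            linarith [hlem, hmono2, h3']
          have hneg : -(e x + u x) ≤ a/2 := by
            linarith [hu_lb x hx]
          have hfin : phi x * (-(e x + u x)) ≤ (k + 8*α*Real.exp (k*T/2)/(3*ym^2)) * (a/2) := by
            apply mul_le_mul hphi_ub hneg (by linarith) _
            have := (Real.exp_pos (k*T/2)).le
            positivity
          calc -(phi x * (e x + u x)) = phi x * (-(e x + u x)) := by ring
            _ ≤ (k + 8*α*Real.exp (k*T/2)/(3*ym^2)) * (a/2) := hfin
            _ = C2 := by rw [hC2_def]; ring
      rcases le_or_gt (e tm1) 0 with hle | hgt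
      · linarith [mul_nonneg hC2_0 hΔ0]
      · set S : Set ℝ := Set.Icc tm tm1 ∩ {s | e s ≤ 0} with hS_def
        have htmS : tm ∈ S := ⟨Set.left_mem_Icc.2 htm, by simp only [Set.mem_setOf_eq, he_tm]; exact le_rfl⟩
        have hSne : S.Nonempty := ⟨tm, htmS⟩
        have hSbdd : BddAbove S := BddAbove.mono Set.inter_subset_left bddAbove_Icc
        have hSclosed : IsClosed S :=
          hconte.preimage_isClosed_of_isClosed isClosed_Icc isClosed_Iic
        set ts := sSup S with hts_def
        have htsS : ts ∈ S := hSclosed.csSup_mem hSne hSbdd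
        have hts_I : ts ∈ Set.Icc tm tm1 := htsS.1
        have hts_lt : ts < tm1 := by
          rcases lt_or_eq_of_le hts_I.2 with h | h
          · exact h
          · exfalso
            have := htsS.2
            rw [h] at this
            simp only [Set.mem_setOf_eq] at this
            linarith
        have hnotS : ∀ x, ts < x → x ≤ tm1 → 0 < e x := by
          intro x h1 h2
          by_contra h3
          push_neg at h3
          have hxS : x ∈ S := ⟨⟨le_trans hts_I.1 h1.le, h2⟩, h3⟩
          exact absurd (le_csSup hSbdd hxS) (not_le.2 h1)
        clear_value ts
        have hsub1 : Set.Icc ts tm1 ⊆ Set.Icc tm tm1 := Set.Icc_subset_Icc hts_I.1 le_rfl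
        have hets : e ts = 0 := by
          refine le_antisymm htsS.2 ?_
          have hne : (nhdsWithin ts (Set.Ioc ts tm1)).NeBot := left_nhdsWithin_Ioc_neBot hts_lt
          have hcw : ContinuousWithinAt e (Set.Ioc ts tm1) ts :=
            (hconte ts hts_I).mono (subset_trans Set.Ioc_subset_Icc_self hsub1)
          exact ge_of_tendsto hcw (by
            filter_upwards [self_mem_nhdsWithin] with x hx
            exact (hnotS x hx.1 hx.2).le)
        have hmono := le_of_hasDerivWithinAt_nonneg (s := ts) (t := tm1)
          (f := fun x => C2 * (x - tm) - e x)
          (f' := fun x => C2 - -(phi x * (e x + u x))) hts_lt.le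
          (fun x hx => by
            have h1 : HasDerivWithinAt (fun x : ℝ => C2 * (x - tm)) C2 (Set.Icc ts tm1) x := by
              simpa using (((hasDerivAt_id x).sub_const tm).const_mul C2).hasDerivWithinAt
            exact h1.sub ((he_deriv x (hsub1 hx)).mono hsub1))
          (fun x hx => by
            show (0:ℝ) ≤ C2 - -(phi x * (e x + u x))
            have hex : 0 ≤ e x := by
              rcases eq_or_lt_of_le hx.1 with hh | hh
              · rw [← hh, hets]
              · exact (hnotS x hh hx.2).le
            linarith [hspeed x (hsub1 hx) hex])
        have hmono' : C2*(ts - tm) - e ts ≤ C2*(tm1 - tm) - e tm1 := hmono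
        have h9 : 0 ≤ C2 * (ts - tm) := mul_nonneg hC2_0 (by linarith [hts_I.1])
        linarith [hets]
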